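/- For every integer K ≥ 3, let N = (K − 1)·(K + 1)·2K·(2K − 1). Then the three pairs (x1, y1) = (2(K+1)(K−1), K(2K−1)), (x2, y2) = ((2K−1)(K+1), 2K(K−1)), (x3, y3) = (2K(K+1), (2K−1)(K−1)) are lattice points on x·y = N satisfying √N < x1 < x2 < x3, and the maximum over i of |x_i − y_i| equals 5K − 1. -/

import Mathlib

theorem stmt_18 (K N : ℤ) (hK : 3 ≤ K)
    (hN : N = (K - 1) * (K + 1) * (2 * K) * (2 * K - 1)) :
    (2 * (K + 1) * (K - 1)) * (K * (2 * K - 1)) = N ∧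
    ((2 * K - 1) * (K + 1)) * (2 * K * (K - 1)) = N ∧
    (2 * K * (K + 1)) * ((2 * K - 1) * (K - 1)) = N ∧
    Real.sqrt (N : ℝ) < ((2 * (K + 1) * (K - 1) : ℤ) : ℝ) ∧
    2 * (K + 1) * (K - 1) < (2 * K - 1) * (K + 1) ∧
    (2 * K - 1) * (K + 1) < 2 * K * (K + 1) ∧
    max |2 * (K + 1) * (K - 1) - K * (2 * K - 1)|
      (max |(2 * K - 1) * (K + 1) - 2 * K * (K - 1)|
        |2 * K * (K + 1) - (2 * K - 1) * (K - 1)|) = 5 * K - 1 := by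
  have h1 : 2 * (K + 1) * (K - 1) - K * (2 * K - 1) = K - 2 := by ring
  have h2 : (2 * K - 1) * (K + 1) - 2 * K * (K - 1) = 3 * K - 1 := by ring
  have h3 : 2 * K * (K + 1) - (2 * K - 1) * (K - 1) = 5 * K - 1 := by ring
  refine ⟨by rw [hN]; ring, by rw [hN]; ring, by rw [hN]; ring, ?_, by nlinarith, by nlinarith, ?_⟩
  · have hx : (0 : ℤ) < 2 * (K + 1) * (K - 1) := by nlinarith
    have hlt : N < (2 * (K + 1) * (K - 1)) ^ 2 := by nlinarith
    have : Real.sqrt (N : ℝ) < Real.sqrt (((2 * (K + 1) * (K - 1)) ^ 2 : ℤ) : ℝ) := by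
      apply Real.sqrt_lt_sqrt
      · have hN0 : (0:ℤ) ≤ N := by nlinarith
        exact_mod_cast hN0
      · exact_mod_cast hlt
    calc Real.sqrt (N : ℝ) < Real.sqrt (((2 * (K + 1) * (K - 1)) ^ 2 : ℤ) : ℝ) := this
      _ = ((2 * (K + 1) * (K - 1) : ℤ) : ℝ) := by
          push_cast
          rw [Real.sqrt_sq (by have h' : (0:ℝ) ≤ ((2 * (K + 1) * (K - 1) : ℤ) : ℝ) := (by exact_mod_cast hx.le); push_cast at h' ⊢; linarith)]
  · rw [h1, h2, h3, abs_of_nonneg (by omega), abs_of_nonneg (by omega),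
      abs_of_nonneg (by omega)]
    omega
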